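/- Let $\kappa_+, \kappa_- \in \mathbb{R}^{3\times 3}$ be symmetric positive definite matrices, let $c_+, c_- > 0$ with $c_+ + c_- = 1$, let $N \in \mathbb{R}^3$ be nonzero, and set $\Delta_f = N \cdot \big(\tfrac{1}{c_+}\kappa_+ + \tfrac{1}{c_-}\kappa_-\big) N > 0$. For $g_\square \in \mathbb{R}^3$ let $a = \Delta_f^{-1} N \cdot (\kappa_- - \kappa_+) g_\square$ and $g_\pm = g_\square \pm \tfrac{a}{c_\pm} N$. Then the averaged flux $q_\square := c_+ \kappa_+ g_+ + c_- \kappa_- g_-$ satisfies $q_\square = \kappa_\square\, g_\square$ with the effective conductivity $\kappa_\square := c_+ \kappa_+ + c_- \kappa_- - \tfrac{1}{\Delta_f}\,\big((\kappa_+ - \kappa_-) N\big) \big((\kappa_+ - \kappa_-) N\big)^{\mathsf T}$, and $\kappa_\square$ is a symmetric matrix. -/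

import Mathlib

open Matrix

/-- Effective thermal conductivity of the composite-voxel laminate: the
volume-averaged heat flux satisfies `q□ = κ□ g□` with
`κ□ = c₊κ₊ + c₋κ₋ - Δ_f⁻¹ ((κ₊-κ₋)N)((κ₊-κ₋)N)ᵀ`, and `κ□` is symmetric. -/
theorem thermal_effective_conductivity
    (κp κm : Matrix (Fin 3) (Fin 3) ℝ)
    (hκp : κp.PosDef) (hκm : κm.PosDef)
    (cp cm : ℝ) (hcp : 0 < cp) (hcm : 0 < cm) (hsum : cp + cm = 1)
    (N : Fin 3 → ℝ) (hN : N ≠ 0)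
    (Δf : ℝ) (hΔf : Δf = N ⬝ᵥ ((cp⁻¹ • κp + cm⁻¹ • κm) *ᵥ N))
    (hΔpos : 0 < Δf)
    (g : Fin 3 → ℝ)
    (a : ℝ) (ha : a = Δf⁻¹ * (N ⬝ᵥ ((κm - κp) *ᵥ g)))
    (gp gm : Fin 3 → ℝ) (hgp : gp = g + (a / cp) • N) (hgm : gm = g - (a / cm) • N)
    (q : Fin 3 → ℝ) (hq : q = cp • (κp *ᵥ gp) + cm • (κm *ᵥ gm))
    (κsq : Matrix (Fin 3) (Fin 3) ℝ)
    (hκsq : κsq = cp • κp + cm • κm -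
      Δf⁻¹ • vecMulVec ((κp - κm) *ᵥ N) ((κp - κm) *ᵥ N)) :
    q = κsq *ᵥ g ∧ κsq.IsSymm := by
  have hsp : κpᵀ = κp := hκp.isHermitian
  have hsm : κmᵀ = κm := hκm.isHermitian
  have hsd : (κp - κm)ᵀ = κp - κm := by rw [transpose_sub, hsp, hsm]
  set v : Fin 3 → ℝ := (κp - κm) *ᵥ N with hv
  have hvv : ∀ x : Fin 3 → ℝ, vecMulVec v v *ᵥ x = (v ⬝ᵥ x) • v := by
    intro x
    ext i
    simp only [vecMulVec_apply, mulVec, dotProduct, Pi.smul_apply, smul_eq_mul, Finset.mul_sum]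
    rw [Finset.sum_mul]
    refine Finset.sum_congr rfl fun j _ => by ring
  have hdot : N ⬝ᵥ ((κm - κp) *ᵥ g) = -(v ⬝ᵥ g) := by
    rw [dotProduct_mulVec, ← mulVec_transpose, transpose_sub, hsp, hsm,
      (neg_sub κp κm).symm, neg_mulVec, neg_dotProduct, hv]
  have ha' : a = -(Δf⁻¹ * (v ⬝ᵥ g)) := by rw [ha, hdot]; ring
  constructor
  · subst hq hgp hgm hκsq
    rw [sub_mulVec, add_mulVec, smul_mulVec, smul_mulVec, smul_mulVec,
      hvv, mulVec_add, mulVec_sub, mulVec_smul, mulVec_smul]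
    ext i
    simp only [Pi.add_apply, Pi.sub_apply, Pi.smul_apply, smul_eq_mul, hv]
    have hcp' : cp ≠ 0 := ne_of_gt hcp
    have hcm' : cm ≠ 0 := ne_of_gt hcm
    rw [ha']
    field_simp
    ring_nf
    simp [hv, mulVec_sub, sub_mulVec]
    ring
  · subst hκsq
    unfold Matrix.IsSymm
    rw [transpose_sub, transpose_add, transpose_smul, transpose_smul, transpose_smul,
      hsp, hsm]
    congr 1
    ext i j
    simp [vecMulVec_apply, mul_comm]
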